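/- Under the assumptions of the USTM lemma (model function φ_k, (δ_k,0)-oracle with δ_k = α_{k+1}ε/(4A_{k+1})), if t* = argmin_{t ∈ dom h} Φ(t) + h(t), then for every k > 0: Φ(t^k) + h(t^k) + (1/(2A_k))‖t* − u^k‖₂² ≤ Φ(t*) + h(t*) + (1/(2A_k))‖t* − t⁰‖₂² + 3ε/4. -/

import Mathlib

open Real

private lemma sq_smul_id {E : Type*} [NormedAddCommGroup E] [InnerProductSpace ℝ E]
    (a b : E) (s : ℝ) :
    ‖(1-s)•a + s•b‖^2 = (1-s)*‖a‖^2 + s*‖b‖^2 - s*(1-s)*‖b-a‖^2 := by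
  simp only [← real_inner_self_eq_norm_sq, inner_add_left, inner_add_right,
    inner_sub_left, inner_sub_right, real_inner_smul_left, real_inner_smul_right,
    real_inner_comm a b]
  ring

private lemma lim_help {c d : ℝ} (H : ∀ τ : ℝ, 0 < τ → τ < 1 → (1-τ)/2*d ≤ c) :
    d/2 ≤ c := by
  by_contra hc
  push_neg at hc
  have h4 := H (1/2) (by norm_num) (by norm_num)
  have hd0 : 0 < d := by nlinarith
  have hτ := H ((d/2 - c)/d) (div_pos (by linarith) hd0) (by rw [div_lt_one hd0]; nlinarith)
  have key : (1 - (d/2-c)/d)/2*d = (d/2+c)/2 := by field_simp; ring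
  linarith [key ▸ hτ]

private lemma quad_min {E : Type*} [NormedAddCommGroup E] [InnerProductSpace ℝ E]
    {D : Set E} (hD : Convex ℝ D) {f : E → ℝ} {t0 u : E} (hu : u ∈ D)
    (hC : ConvexOn ℝ D (fun t => f t - (1/2)*‖t - t0‖^2))
    (hmin : ∀ t ∈ D, f u ≤ f t) :
    ∀ t ∈ D, f u + (1/2)*‖t - u‖^2 ≤ f t := by
  intro t ht
  have key : ∀ τ : ℝ, 0 < τ → τ < 1 → (1-τ)/2*‖t-u‖^2 ≤ f t - f u := by
    intro τ h0 h1
    have hz : (1-τ)•u + τ•t ∈ D := hD hu ht (by linarith) h0.le (by ring)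
    have hfz := hmin _ hz
    have hcv := hC.2 hu ht (show (0:ℝ) ≤ 1-τ by linarith) h0.le (show (1-τ)+τ = (1:ℝ) by ring)
    simp only [smul_eq_mul] at hcv
    have hq : ‖((1-τ)•u + τ•t) - t0‖^2
        = (1-τ)*‖u - t0‖^2 + τ*‖t - t0‖^2 - τ*(1-τ)*‖(t-t0)-(u-t0)‖^2 := by
      have harg : ((1-τ)•u + τ•t) - t0 = (1-τ)•(u-t0) + τ•(t-t0) := by module
      rw [harg, sq_smul_id]
    have hsub : (t-t0)-(u-t0) = t - u := by abel
    rw [hsub] at hq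
    nlinarith [hcv, hq, hfz]
  have := lim_help key
  linarith

private lemma aux_conv {E : Type*} [NormedAddCommGroup E] [InnerProductSpace ℝ E]
    (D : Set E) (hD : Convex ℝ D) (h : E → ℝ) (hh : ConvexOn ℝ D h) (v : E) (c a : ℝ)
    (ha : 0 ≤ a) :
    ConvexOn ℝ D (fun t => a * ((inner ℝ v t : ℝ) + c) + a * h t) := by
  refine ⟨hD, fun x hx y hy s r hs hr hsr => ?_⟩
  have hhv := hh.2 hx hy hs hr hsr
  simp only [inner_add_right, real_inner_smul_right, smul_eq_mul] at *
  have e : s*(a*((inner ℝ v x:ℝ) + c) + a*h x) + r*(a*((inner ℝ v y:ℝ)+c) + a*h y)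
      = a*((s*(inner ℝ v x:ℝ) + r*(inner ℝ v y:ℝ)) + c) + a*(s*h x + r*h y) := by
    linear_combination a*c*hsr
  nlinarith [mul_le_mul_of_nonneg_left hhv ha]

/-- Convergence bound of USTM at the minimizer with a (δₖ,0)-inexact oracle (Lemma 3 of the paper):
`Φ(tᵏ) + h(tᵏ) ≤ (1/Aₖ)φₖ(t) − (1/(2Aₖ))‖t − uᵏ‖² + 3ε/4` for all `t ∈ dom h`. -/
theorem stmt9 {E : Type*} [NormedAddCommGroup E] [InnerProductSpace ℝ E]
    (D : Set E) (h : E → ℝ) (hh : ConvexOn ℝ D h)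
    (Φ : E → ℝ) (hΦ : ConvexOn ℝ D Φ)
    (ε : ℝ) (hε : 0 < ε)
    (Φt : E → ℝ) (g : E → E)  -- inexact oracle Φ̃, ∇̃Φ
    (α A L : ℕ → ℝ) (tseq useq yseq : ℕ → E) (t0 : E)
    (φ : ℕ → E → ℝ)
    (hA0 : A 0 = 0) (hAs : ∀ k, A (k + 1) = A k + α (k + 1))
    (hαpos : ∀ k, 0 < α (k + 1)) (hLpos : ∀ k, 0 < L (k + 1))
    (hαL : ∀ k, L (k + 1) * α (k + 1) ^ 2 = A (k + 1))
    (ht0 : tseq 0 = t0) (hu0 : useq 0 = t0)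
    (hφ0 : ∀ t, φ 0 t = (1 / 2) * ‖t - t0‖ ^ 2)
    (hφs : ∀ k t, φ (k + 1) t = φ k t +
        α (k + 1) * (Φt (yseq (k + 1)) +
          (inner ℝ (g (yseq (k + 1))) (t - yseq (k + 1)) : ℝ) + h t))
    (hy : ∀ k, yseq (k + 1) = (A (k + 1))⁻¹ • (α (k + 1) • useq k + A k • tseq k))
    (ht : ∀ k, tseq (k + 1) = (A (k + 1))⁻¹ • (α (k + 1) • useq (k + 1) + A k • tseq k))
    (hu : ∀ k, useq (k + 1) ∈ D ∧ ∀ t ∈ D, φ (k + 1) (useq (k + 1)) ≤ φ (k + 1) t)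
    -- (δₖ,0)-inexact oracle with δₖ = α_{k+1} ε / (4 A_{k+1})
    (horacle : ∀ k, ∀ t ∈ D, ∀ t' ∈ D,
        Φ t' ≤ Φt t' + α (k + 1) * ε / (4 * A (k + 1)) ∧
        Φt t + (inner ℝ (g t) (t' - t) : ℝ) ≤ Φ t')
    -- inner stopping criterion
    (hstop : ∀ k, Φt (tseq (k + 1)) ≤ Φt (yseq (k + 1)) +
        (inner ℝ (g (yseq (k + 1))) (tseq (k + 1) - yseq (k + 1)) : ℝ) +
        L (k + 1) / 2 * ‖tseq (k + 1) - yseq (k + 1)‖ ^ 2 +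
        α (k + 1) / (2 * A (k + 1)) * ε)
    (htD : ∀ k, tseq k ∈ D) (hyD : ∀ k, yseq (k + 1) ∈ D) :
    ∀ tstar ∈ D, (∀ t ∈ D, Φ tstar + h tstar ≤ Φ t + h t) →
      ∀ k : ℕ, 0 < k →
        Φ (tseq k) + h (tseq k) + (1 / (2 * A k)) * ‖tstar - useq k‖ ^ 2 ≤
          Φ tstar + h tstar + (1 / (2 * A k)) * ‖tstar - t0‖ ^ 2 + 3 * ε / 4 := by
  have hD : Convex ℝ D := hh.1
  have Anonneg : ∀ k, 0 ≤ A k := by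
    intro k
    induction k with
    | zero => exact le_of_eq hA0.symm
    | succ k ih => rw [hAs]; linarith [hαpos k]
  have hApos : ∀ k, 0 < A (k + 1) := by
    intro k
    rw [hAs]; linarith [hαpos k, Anonneg k]
  have uD : ∀ k, useq k ∈ D := by
    intro k
    cases k with
    | zero => rw [hu0, ← ht0]; exact htD 0
    | succ k => exact (hu k).1
  -- convexity of φ k minus the quadratic
  have convC : ∀ k, ConvexOn ℝ D (fun t => φ k t - (1/2)*‖t - t0‖^2) := by
    intro k
    induction k with
    | zero =>
        have e : (fun t => φ 0 t - (1/2)*‖t - t0‖^2) = fun _ => (0:ℝ) := by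
          funext t; rw [hφ0]; ring
        rw [e]; exact convexOn_const 0 hD
    | succ k ih =>
        have e : (fun t => φ (k+1) t - (1/2)*‖t - t0‖^2)
            = fun t => (φ k t - (1/2)*‖t - t0‖^2)
              + (α (k+1) * ((inner ℝ (g (yseq (k+1))) t : ℝ)
                  + (Φt (yseq (k+1)) - (inner ℝ (g (yseq (k+1))) (yseq (k+1)) : ℝ)))
                + α (k+1) * h t) := by
          funext t
          rw [hφs k t]
          simp only [inner_sub_right]
          ring
        rw [e]
        exact ih.add (aux_conv D hD h hh _ _ _ (hαpos k).le)
  -- quadratic growth at the minimizer of φ k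
  have qgrow : ∀ k, ∀ t ∈ D, φ k (useq k) + (1/2)*‖t - useq k‖^2 ≤ φ k t := by
    intro k
    cases k with
    | zero =>
        intro t htmem
        rw [hu0, hφ0, hφ0]
        simp
    | succ k => exact quad_min hD (hu k).1 (convC (k+1)) (hu k).2
  -- main invariant
  have inv : ∀ k, A k * (Φ (tseq k) + h (tseq k)) ≤ φ k (useq k) + 3/4*ε*A k := by
    intro k
    induction k with
    | zero => rw [hA0, hu0, hφ0]; simp
    | succ k ih =>
        have hA1 : 0 < A (k+1) := hApos k
        have hAne : A (k+1) ≠ 0 := hA1.ne'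
        have hα1 : 0 < α (k+1) := hαpos k
        have hyv : A (k+1) • yseq (k+1) = α (k+1) • useq k + A k • tseq k := by
          rw [hy k, smul_inv_smul₀ hAne]
        have htv : A (k+1) • tseq (k+1) = α (k+1) • useq (k+1) + A k • tseq k := by
          rw [ht k, smul_inv_smul₀ hAne]
        have keyvec : tseq (k+1) - yseq (k+1)
            = (α (k+1)/A (k+1)) • (useq (k+1) - useq k) := by
          have h1 : A (k+1) • (tseq (k+1) - yseq (k+1))
              = α (k+1) • (useq (k+1) - useq k) := by
            rw [smul_sub, hyv, htv, smul_sub]; abel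
          calc tseq (k+1) - yseq (k+1)
              = (A (k+1))⁻¹ • (A (k+1) • (tseq (k+1) - yseq (k+1))) :=
                (inv_smul_smul₀ hAne _).symm
            _ = (A (k+1))⁻¹ • (α (k+1) • (useq (k+1) - useq k)) := by rw [h1]
            _ = (α (k+1)/A (k+1)) • (useq (k+1) - useq k) := by
                rw [smul_smul, div_eq_inv_mul]
        have hnorm : ‖tseq (k+1) - yseq (k+1)‖^2
            = (α (k+1)/A (k+1))^2 * ‖useq (k+1) - useq k‖^2 := by
          rw [keyvec, norm_smul, Real.norm_eq_abs, abs_of_pos (div_pos hα1 hA1), mul_pow]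
        have f9 : L (k+1)*A (k+1)/2 * ‖tseq (k+1) - yseq (k+1)‖^2
            = 1/2 * ‖useq (k+1) - useq k‖^2 := by
          rw [hnorm]
          have hl := hαL k
          field_simp
          linear_combination ‖useq (k+1) - useq k‖^2 * hl
        have hvec2 : A k • (tseq k - yseq (k+1)) + α (k+1) • (useq (k+1) - yseq (k+1))
            = A (k+1) • (tseq (k+1) - yseq (k+1)) := by
          rw [smul_sub, smul_sub, smul_sub, htv, hAs k, add_smul]
          abel
        have f8 : A k * (inner ℝ (g (yseq (k+1))) (tseq k - yseq (k+1)) : ℝ)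
            + α (k+1) * (inner ℝ (g (yseq (k+1))) (useq (k+1) - yseq (k+1)) : ℝ)
            = A (k+1) * (inner ℝ (g (yseq (k+1))) (tseq (k+1) - yseq (k+1)) : ℝ) := by
          have hc := congrArg (fun v => (inner ℝ (g (yseq (k+1))) v : ℝ)) hvec2
          simpa [inner_add_right, real_inner_smul_right] using hc
        -- convexity of h applied to t^{k+1}
        have hcomb : tseq (k+1)
            = (α (k+1)/A (k+1)) • useq (k+1) + (A k/A (k+1)) • tseq k := by
          rw [ht k, smul_add, smul_smul, smul_smul, div_eq_inv_mul, div_eq_inv_mul]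
        have hconv := hh.2 (uD (k+1)) (htD k) (div_pos hα1 hA1).le
          (div_nonneg (Anonneg k) hA1.le)
          (show α (k+1)/A (k+1) + A k/A (k+1) = 1 by
            field_simp; linarith [hAs k])
        rw [← hcomb] at hconv
        simp only [smul_eq_mul] at hconv
        have f5 : A (k+1) * h (tseq (k+1))
            ≤ α (k+1) * h (useq (k+1)) + A k * h (tseq k) := by
          have h2 := mul_le_mul_of_nonneg_left hconv hA1.le
          have e : A (k+1) * (α (k+1)/A (k+1) * h (useq (k+1)) + A k/A (k+1) * h (tseq k))
              = α (k+1)*h (useq (k+1)) + A k*h (tseq k) := by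
            field_simp
          rw [e] at h2
          exact h2
        -- oracle and stopping facts
        have f4 := (horacle k (yseq (k+1)) (hyD k) (tseq k) (htD k)).2
        have f6 := (horacle k (yseq (k+1)) (hyD k) (tseq (k+1)) (htD (k+1))).1
        have f7 := hstop k
        have f2 := qgrow k (useq (k+1)) (uD (k+1))
        have f1 : φ (k+1) (useq (k+1)) = φ k (useq (k+1))
            + α (k+1)*Φt (yseq (k+1))
            + α (k+1)*(inner ℝ (g (yseq (k+1))) (useq (k+1) - yseq (k+1)) : ℝ)
            + α (k+1)*h (useq (k+1)) := by
          rw [hφs k]; ring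
        have m4 : A k * (Φt (yseq (k+1)) + (inner ℝ (g (yseq (k+1))) (tseq k - yseq (k+1)) : ℝ))
            ≤ A k * Φ (tseq k) := mul_le_mul_of_nonneg_left f4 (Anonneg k)
        have m6 : A (k+1) * Φ (tseq (k+1))
            ≤ A (k+1) * Φt (tseq (k+1)) + α (k+1)*ε/4 := by
          have h2 := mul_le_mul_of_nonneg_left f6 hA1.le
          have e : A (k+1) * (Φt (tseq (k+1)) + α (k+1)*ε/(4*A (k+1)))
              = A (k+1) * Φt (tseq (k+1)) + α (k+1)*ε/4 := by
            field_simp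
          rw [e] at h2
          exact h2
        have m7 : A (k+1) * Φt (tseq (k+1))
            ≤ A (k+1)*Φt (yseq (k+1))
              + A (k+1)*(inner ℝ (g (yseq (k+1))) (tseq (k+1) - yseq (k+1)) : ℝ)
              + L (k+1)*A (k+1)/2*‖tseq (k+1) - yseq (k+1)‖^2
              + α (k+1)/2*ε := by
          have h2 := mul_le_mul_of_nonneg_left f7 hA1.le
          have e : A (k+1) * (Φt (yseq (k+1))
              + (inner ℝ (g (yseq (k+1))) (tseq (k+1) - yseq (k+1)) : ℝ)
              + L (k+1)/2*‖tseq (k+1) - yseq (k+1)‖^2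
              + α (k+1)/(2*A (k+1))*ε)
              = A (k+1)*Φt (yseq (k+1))
              + A (k+1)*(inner ℝ (g (yseq (k+1))) (tseq (k+1) - yseq (k+1)) : ℝ)
              + L (k+1)*A (k+1)/2*‖tseq (k+1) - yseq (k+1)‖^2
              + α (k+1)/2*ε := by
            field_simp
          rw [e] at h2
          exact h2
        have p1 : A (k+1)*Φt (yseq (k+1)) = A k*Φt (yseq (k+1)) + α (k+1)*Φt (yseq (k+1)) := by
          rw [hAs k]; ring
        have p2 : 3/4*ε*A (k+1) = 3/4*ε*A k + 3/4*ε*α (k+1) := by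
          rw [hAs k]; ring
        linarith [f1, f2, ih, m4, f5, m6, m7, f8, f9, p1, p2]
  intro tstar htstar _hmin k hk
  -- upper bound φ k tstar ≤ A k (Φ+h)(tstar) + ½‖tstar−t0‖²
  have ub : ∀ k, φ k tstar ≤ A k * (Φ tstar + h tstar) + (1/2)*‖tstar - t0‖^2 := by
    intro k
    induction k with
    | zero => rw [hφ0, hA0]; simp
    | succ k ih =>
        rw [hφs k tstar]
        have f4s := (horacle k (yseq (k+1)) (hyD k) tstar htstar).2
        have hm := mul_le_mul_of_nonneg_left f4s (hαpos k).le
        have p : A (k+1)*(Φ tstar + h tstar)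
            = A k*(Φ tstar + h tstar) + α (k+1)*(Φ tstar + h tstar) := by
          rw [hAs k]; ring
        linarith [ih, hm, p]
  obtain ⟨m, rfl⟩ : ∃ m, k = m + 1 := ⟨k - 1, (Nat.succ_pred_eq_of_pos hk).symm⟩
  have hA1 : 0 < A (m+1) := hApos m
  have H1 := inv (m+1)
  have H2 := qgrow (m+1) tstar htstar
  have H3 := ub (m+1)
  have e1 : Φ (tseq (m+1)) + h (tseq (m+1)) + 1/(2*A (m+1))*‖tstar - useq (m+1)‖^2
      = (A (m+1)*(Φ (tseq (m+1)) + h (tseq (m+1))) + 1/2*‖tstar - useq (m+1)‖^2)/A (m+1) := by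
    field_simp
  have e2 : Φ tstar + h tstar + 1/(2*A (m+1))*‖tstar - t0‖^2 + 3*ε/4
      = (A (m+1)*(Φ tstar + h tstar) + 1/2*‖tstar - t0‖^2 + 3/4*ε*A (m+1))/A (m+1) := by
    field_simp
  rw [e1, e2]
  exact div_le_div_of_nonneg_right (by linarith) hA1.le
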